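/- Let 0 < p ≤ 1/2, q = 1 − p, and for each integer i ≥ 0 set a_i := 1 − (p/q)(1 − p^i). For each integer i ≥ 1 let F_i be the probability that the Bernoulli walk first reaches level 1 at time i, i.e. F_i = 0 if i is even and F_{2j+1} = (1/(j+1))·C(2j, j)·p^{j+1} q^{j}. Then for every integer n ≥ 27: Σ_{i=1}^{n−1} a_{n−i}·F_i ≤ a_7·(p/q) + (p/50)·(a_5 + a_3 + a_1). -/

import Mathlib

/-- `a_i = 1 − (p/q)(1 − p^i)` with `q = 1 − p`. -/
noncomputable def aCoef (p : ℝ) (i : ℕ) : ℝ :=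
  1 - (p / (1 - p)) * (1 - p ^ i)

/-- `F_i`: probability that the Bernoulli walk first reaches level 1 at time `i`;
zero for even `i`, and `F_{2j+1} = C(2j,j)/(j+1)·p^{j+1}·q^j`. -/
noncomputable def firstPassage (p : ℝ) (i : ℕ) : ℝ :=
  if i % 2 = 1 then
    (((i - 1).choose ((i - 1) / 2) : ℝ) / ((i - 1) / 2 + 1)) *
      p ^ ((i - 1) / 2 + 1) * (1 - p) ^ ((i - 1) / 2)
  else 0

lemma choose_cast_catalan (j : ℕ) : (((2 * j).choose j : ℕ) : ℝ) = ((j : ℝ) + 1) * catalan j := by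
  have h := succ_mul_catalan_eq_centralBinom j
  rw [Nat.centralBinom_eq_two_mul_choose] at h
  exact_mod_cast h.symm

lemma firstPassage_even {p : ℝ} {i : ℕ} (h : i % 2 = 0) : firstPassage p i = 0 := by
  unfold firstPassage
  rw [if_neg (by omega)]

lemma firstPassage_odd (p : ℝ) (j : ℕ) :
    firstPassage p (2 * j + 1) = (catalan j : ℝ) * p ^ (j + 1) * (1 - p) ^ j := by
  have h1 : (2 * j + 1) % 2 = 1 := by omega
  have h2 : 2 * j + 1 - 1 = 2 * j := rfl
  have h3 : 2 * j / 2 = j := by omega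
  unfold firstPassage
  rw [if_pos h1, h2, h3, choose_cast_catalan]
  have hj : ((j : ℝ) + 1) ≠ 0 := by positivity
  push_cast
  field_simp
  rw [div_eq_iff (by have := (Nat.cast_nonneg j : (0:ℝ) ≤ j); linarith)]
  ring

lemma firstPassage_nonneg {p : ℝ} (hp0 : 0 ≤ p) (hp1 : p ≤ 1) (i : ℕ) :
    0 ≤ firstPassage p i := by
  unfold firstPassage
  split_ifs with h
  · have hi : 1 ≤ i := by omega
    have hiR : (1 : ℝ) ≤ (i : ℕ) := by exact_mod_cast hi
    have hden : (0 : ℝ) ≤ ((i : ℕ) - 1) / 2 + 1 := by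
      have : (0:ℝ) ≤ ((i:ℕ) : ℝ) - 1 := by linarith
      linarith
    apply mul_nonneg
    apply mul_nonneg
    · exact div_nonneg (Nat.cast_nonneg _) hden
    · exact pow_nonneg hp0 _
    · exact pow_nonneg (by linarith) _
  · exact le_rfl

lemma catalan_cast_succ (k : ℕ) :
    (catalan (k + 1) : ℝ) = ∑ i ∈ Finset.range (k + 1), (catalan i : ℝ) * (catalan (k - i) : ℝ) := by
  rw [catalan_succ', Finset.Nat.sum_antidiagonal_eq_sum_range_succ_mk]
  push_cast
  rfl

lemma keyS (p : ℝ) (hp0 : 0 ≤ p) (hp1 : p < 1) (m : ℕ) :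
    ∑ j ∈ Finset.range m, (catalan j : ℝ) * (p * (1 - p)) ^ j ≤ 1 / (1 - p) := by
  have hq : 0 < 1 - p := by linarith
  have ht0 : 0 ≤ p * (1 - p) := mul_nonneg hp0 hq.le
  induction m with
  | zero =>
    simp only [Finset.range_zero, Finset.sum_empty]
    exact div_nonneg zero_le_one hq.le
  | succ m ih =>
    set t : ℝ := p * (1 - p) with ht
    set S : ℝ := ∑ j ∈ Finset.range m, (catalan j : ℝ) * t ^ j with hS
    have hS0 : 0 ≤ S :=
      Finset.sum_nonneg fun j _ => mul_nonneg (Nat.cast_nonneg _) (pow_nonneg ht0 _)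
    have key : ∑ j ∈ Finset.range (m + 1), (catalan j : ℝ) * t ^ j ≤ 1 + t * (S * S) := by
      rw [Finset.sum_range_succ']
      simp only [catalan_zero, Nat.cast_one, pow_zero, mul_one, one_mul]
      have hmain : ∑ k ∈ Finset.range m, (catalan (k + 1) : ℝ) * t ^ (k + 1) ≤ t * (S * S) := by
        have e1 : ∑ k ∈ Finset.range m, (catalan (k + 1) : ℝ) * t ^ (k + 1)
            = ∑ k ∈ Finset.range m, ∑ i ∈ Finset.range (k + 1),
                (catalan i : ℝ) * (catalan (k - i) : ℝ) * t ^ (k + 1) := by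
          refine Finset.sum_congr rfl fun k _ => ?_
          rw [catalan_cast_succ k, Finset.sum_mul]
        have e2 : ∑ k ∈ Finset.range m, ∑ i ∈ Finset.range (k + 1),
                (catalan i : ℝ) * (catalan (k - i) : ℝ) * t ^ (k + 1)
            = ∑ i ∈ Finset.range m, ∑ k ∈ Finset.Ico i m,
                (catalan i : ℝ) * (catalan (k - i) : ℝ) * t ^ (k + 1) := by
          apply Finset.sum_comm'
          intro k i
          simp only [Finset.mem_range, Finset.mem_Ico]
          omega
        have e3 : ∀ i ∈ Finset.range m,
            ∑ k ∈ Finset.Ico i m, (catalan i : ℝ) * (catalan (k - i) : ℝ) * t ^ (k + 1)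
            = ∑ d ∈ Finset.range (m - i), (catalan i : ℝ) * (catalan d : ℝ) * t ^ (i + d + 1) := by
          intro i _
          rw [Finset.sum_Ico_eq_sum_range]
          refine Finset.sum_congr rfl fun d _ => ?_
          rw [Nat.add_sub_cancel_left]
        have e4 : ∑ i ∈ Finset.range m, ∑ d ∈ Finset.range (m - i),
                (catalan i : ℝ) * (catalan d : ℝ) * t ^ (i + d + 1)
            ≤ ∑ i ∈ Finset.range m, ∑ d ∈ Finset.range m,
                (catalan i : ℝ) * (catalan d : ℝ) * t ^ (i + d + 1) := by
          refine Finset.sum_le_sum fun i _ => ?_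
          refine Finset.sum_le_sum_of_subset_of_nonneg
            (Finset.range_subset_range.2 (by omega)) fun d _ _ => ?_
          have : (0:ℝ) ≤ t ^ (i + d + 1) := pow_nonneg ht0 _
          positivity
        have e5 : ∑ i ∈ Finset.range m, ∑ d ∈ Finset.range m,
                (catalan i : ℝ) * (catalan d : ℝ) * t ^ (i + d + 1) = t * (S * S) := by
          rw [hS, Finset.sum_mul_sum, Finset.mul_sum]
          refine Finset.sum_congr rfl fun i _ => ?_
          rw [Finset.mul_sum]
          refine Finset.sum_congr rfl fun d _ => ?_
          rw [pow_add, pow_add, pow_one]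
          ring
        calc ∑ k ∈ Finset.range m, (catalan (k + 1) : ℝ) * t ^ (k + 1)
            = ∑ i ∈ Finset.range m, ∑ k ∈ Finset.Ico i m,
                (catalan i : ℝ) * (catalan (k - i) : ℝ) * t ^ (k + 1) := by rw [e1, e2]
          _ = ∑ i ∈ Finset.range m, ∑ d ∈ Finset.range (m - i),
                (catalan i : ℝ) * (catalan d : ℝ) * t ^ (i + d + 1) :=
              Finset.sum_congr rfl e3
          _ ≤ ∑ i ∈ Finset.range m, ∑ d ∈ Finset.range m,
                (catalan i : ℝ) * (catalan d : ℝ) * t ^ (i + d + 1) := e4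
          _ = t * (S * S) := e5
      linarith
    have hSle : S ≤ 1 / (1 - p) := ih
    have h1 : t * (S * S) ≤ t * ((1 / (1 - p)) * (1 / (1 - p))) := by
      apply mul_le_mul_of_nonneg_left ?_ ht0
      nlinarith
    have h2 : 1 + t * ((1 / (1 - p)) * (1 / (1 - p))) = 1 / (1 - p) := by
      have hne : (1 : ℝ) - p ≠ 0 := ne_of_gt hq
      have hu : (1 - p) * (1 / (1 - p)) = 1 := by
        rw [one_div]
        exact mul_inv_cancel₀ hne
      have expand : t * ((1 / (1 - p)) * (1 / (1 - p)))
          = p * ((1 - p) * (1 / (1 - p))) * (1 / (1 - p)) := by rw [ht]; ring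
      rw [expand, hu, mul_one]
      calc 1 + p * (1 / (1 - p)) = (1 - p) * (1 / (1 - p)) + p * (1 / (1 - p)) := by rw [hu]
        _ = ((1 - p) + p) * (1 / (1 - p)) := by ring
        _ = 1 / (1 - p) := by rw [show (1 : ℝ) - p + p = 1 by ring, one_mul]
    linarith

lemma sumF_eq (p : ℝ) (M : ℕ) :
    ∑ i ∈ Finset.range (2 * M), firstPassage p i
      = ∑ j ∈ Finset.range M, (catalan j : ℝ) * p ^ (j + 1) * (1 - p) ^ j := by
  induction M with
  | zero => simp
  | succ M ih =>
    have h2 : 2 * (M + 1) = 2 * M + 1 + 1 := by ring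
    rw [h2, Finset.sum_range_succ, Finset.sum_range_succ, ih,
      firstPassage_even (by omega : (2 * M) % 2 = 0), firstPassage_odd,
      Finset.sum_range_succ]
    ring

lemma sumF_range_le (p : ℝ) (hp0 : 0 < p) (hp : p ≤ 1 / 2) (N : ℕ) :
    ∑ i ∈ Finset.range N, firstPassage p i ≤ p / (1 - p) := by
  have hq : 0 < 1 - p := by linarith
  have hnn : ∀ i, 0 ≤ firstPassage p i := firstPassage_nonneg hp0.le (by linarith)
  calc ∑ i ∈ Finset.range N, firstPassage p i
      ≤ ∑ i ∈ Finset.range (2 * N), firstPassage p i :=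
        Finset.sum_le_sum_of_subset_of_nonneg (Finset.range_subset_range.2 (by omega))
          (fun i _ _ => hnn i)
    _ = ∑ j ∈ Finset.range N, (catalan j : ℝ) * p ^ (j + 1) * (1 - p) ^ j := sumF_eq p N
    _ = p * ∑ j ∈ Finset.range N, (catalan j : ℝ) * (p * (1 - p)) ^ j := by
        rw [Finset.mul_sum]
        refine Finset.sum_congr rfl fun j _ => ?_
        rw [mul_pow]
        ring
    _ ≤ p * (1 / (1 - p)) :=
        mul_le_mul_of_nonneg_left (keyS p hp0.le (by linarith) N) hp0.le
    _ = p / (1 - p) := by ring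

lemma catalan_ratio (j : ℕ) : (j + 2) * catalan (j + 1) = 2 * (2 * j + 1) * catalan j := by
  have h1 := succ_mul_catalan_eq_centralBinom (j + 1)
  have h2 := Nat.succ_mul_centralBinom_succ j
  have h3 := succ_mul_catalan_eq_centralBinom j
  have key : (j + 1) * ((j + 2) * catalan (j + 1)) = (j + 1) * (2 * (2 * j + 1) * catalan j) := by
    calc (j + 1) * ((j + 2) * catalan (j + 1)) = (j + 1) * (j + 1).centralBinom := by
          rw [← h1]
      _ = 2 * (2 * j + 1) * j.centralBinom := h2
      _ = 2 * (2 * j + 1) * ((j + 1) * catalan j) := by rw [h3]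
      _ = (j + 1) * (2 * (2 * j + 1) * catalan j) := by ring
  exact Nat.eq_of_mul_eq_mul_left (by omega) key

lemma catalan_quarter {j : ℕ} (hj : 10 ≤ j) : (catalan j : ℝ) * (1 / 4) ^ j ≤ 1 / 50 := by
  induction j, hj using Nat.le_induction with
  | base =>
    have h10 : catalan 10 = 16796 := by
      simp [catalan_succ', Finset.Nat.sum_antidiagonal_eq_sum_range_succ_mk,
        Finset.sum_range_succ]
    rw [h10]
    norm_num
  | succ j hj ih =>
    have hr : ((j : ℝ) + 2) * catalan (j + 1) = 2 * (2 * (j : ℝ) + 1) * catalan j := by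
      exact_mod_cast catalan_ratio j
    have hc0 : (0:ℝ) ≤ (catalan j : ℝ) := Nat.cast_nonneg _
    have hj0 : (0:ℝ) ≤ (j : ℝ) := Nat.cast_nonneg _
    have h4 : (catalan (j + 1) : ℝ) ≤ 4 * catalan j := by nlinarith
    calc (catalan (j + 1) : ℝ) * (1 / 4) ^ (j + 1)
        ≤ (4 * catalan j) * (1 / 4) ^ (j + 1) :=
          mul_le_mul_of_nonneg_right h4 (by positivity)
      _ = (catalan j : ℝ) * (1 / 4) ^ j := by rw [pow_succ]; ring
      _ ≤ 1 / 50 := ih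

lemma F_le_p50 {p : ℝ} (hp0 : 0 < p) (hp : p ≤ 1 / 2) {i : ℕ} (hodd : i % 2 = 1)
    (hi : 21 ≤ i) : firstPassage p i ≤ p / 50 := by
  obtain ⟨j, rfl⟩ : ∃ j, i = 2 * j + 1 := ⟨(i - 1) / 2, by omega⟩
  have hj : 10 ≤ j := by omega
  have hq : 0 < 1 - p := by linarith
  have hpq0 : 0 ≤ p * (1 - p) := mul_nonneg hp0.le hq.le
  have hpq : p * (1 - p) ≤ 1 / 4 := by nlinarith
  rw [firstPassage_odd]
  have e : (catalan j : ℝ) * p ^ (j + 1) * (1 - p) ^ j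
      = p * ((catalan j : ℝ) * (p * (1 - p)) ^ j) := by
    rw [mul_pow, pow_succ]
    ring
  rw [e]
  have h1 : (catalan j : ℝ) * (p * (1 - p)) ^ j ≤ (catalan j : ℝ) * (1 / 4) ^ j :=
    mul_le_mul_of_nonneg_left (pow_le_pow_left₀ hpq0 hpq j) (Nat.cast_nonneg _)
  have h2 : (catalan j : ℝ) * (1 / 4) ^ j ≤ 1 / 50 := catalan_quarter hj
  calc p * ((catalan j : ℝ) * (p * (1 - p)) ^ j) ≤ p * (1 / 50) :=
        mul_le_mul_of_nonneg_left (by linarith) hp0.le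
    _ = p / 50 := by ring

lemma F_pair {p : ℝ} (hp0 : 0 < p) (hp : p ≤ 1 / 2) {i : ℕ} (hi : 21 ≤ i) :
    firstPassage p i + firstPassage p (i + 1) ≤ p / 50 := by
  rcases Nat.mod_two_eq_zero_or_one i with h0 | h1
  · rw [firstPassage_even h0]
    have := F_le_p50 hp0 hp (by omega : (i + 1) % 2 = 1) (by omega : 21 ≤ i + 1)
    linarith
  · rw [firstPassage_even (by omega : (i + 1) % 2 = 0)]
    have := F_le_p50 hp0 hp h1 hi
    linarith

lemma aCoef_nonneg {p : ℝ} (hp0 : 0 < p) (hp : p ≤ 1 / 2) (i : ℕ) : 0 ≤ aCoef p i := by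
  unfold aCoef
  have hq : 0 < 1 - p := by linarith
  have h1 : p / (1 - p) ≤ 1 := by rw [div_le_one hq]; linarith
  have hs : 0 ≤ p / (1 - p) := div_nonneg hp0.le hq.le
  have h2 : 0 ≤ p ^ i := pow_nonneg hp0.le i
  have h3 : p ^ i ≤ 1 := pow_le_one₀ hp0.le (by linarith)
  nlinarith

lemma aCoef_anti {p : ℝ} (hp0 : 0 < p) (hp : p ≤ 1 / 2) {i j : ℕ} (h : i ≤ j) :
    aCoef p j ≤ aCoef p i := by
  unfold aCoef
  have hq : 0 < 1 - p := by linarith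
  have hs : 0 ≤ p / (1 - p) := div_nonneg hp0.le hq.le
  have hpow : p ^ j ≤ p ^ i := pow_le_pow_of_le_one hp0.le (by linarith) h
  nlinarith

/-- For `0 < p ≤ 1/2` and `n ≥ 27`:
`Σ_{i=1}^{n−1} a_{n−i}·F_i ≤ a_7·(p/q) + (p/50)·(a_5 + a_3 + a_1)`. -/
theorem weighted_first_passage_bound (p : ℝ) (hp0 : 0 < p) (hp : p ≤ 1 / 2)
    (n : ℕ) (hn : 27 ≤ n) :
    ∑ i ∈ Finset.Icc 1 (n - 1), aCoef p (n - i) * firstPassage p i ≤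
      aCoef p 7 * (p / (1 - p)) + p / 50 * (aCoef p 5 + aCoef p 3 + aCoef p 1) := by
  obtain ⟨m, rfl⟩ : ∃ m, n = 27 + m := ⟨n - 27, by omega⟩
  have hq : 0 < 1 - p := by linarith
  have hFnn : ∀ i, 0 ≤ firstPassage p i := firstPassage_nonneg hp0.le (by linarith)
  have hIcc : Finset.Icc 1 (27 + m - 1) = Finset.Ico 1 (27 + m) := by
    ext x
    simp only [Finset.mem_Icc, Finset.mem_Ico]
    omega
  rw [hIcc, ← Finset.sum_Ico_consecutive _ (show 1 ≤ 21 + m by omega)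
    (show 21 + m ≤ 27 + m by omega)]
  have hA : ∑ i ∈ Finset.Ico 1 (21 + m), aCoef p (27 + m - i) * firstPassage p i
      ≤ aCoef p 7 * (p / (1 - p)) := by
    calc ∑ i ∈ Finset.Ico 1 (21 + m), aCoef p (27 + m - i) * firstPassage p i
        ≤ ∑ i ∈ Finset.Ico 1 (21 + m), aCoef p 7 * firstPassage p i := by
          refine Finset.sum_le_sum fun i hi => ?_
          simp only [Finset.mem_Ico] at hi
          exact mul_le_mul_of_nonneg_right (aCoef_anti hp0 hp (by omega)) (hFnn i)
      _ = aCoef p 7 * ∑ i ∈ Finset.Ico 1 (21 + m), firstPassage p i := by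
          rw [Finset.mul_sum]
      _ ≤ aCoef p 7 * (p / (1 - p)) := by
          refine mul_le_mul_of_nonneg_left ?_ (aCoef_nonneg hp0 hp 7)
          calc ∑ i ∈ Finset.Ico 1 (21 + m), firstPassage p i
              ≤ ∑ i ∈ Finset.range (21 + m), firstPassage p i := by
                refine Finset.sum_le_sum_of_subset_of_nonneg ?_ fun i _ _ => hFnn i
                rw [Finset.range_eq_Ico]
                exact Finset.Ico_subset_Ico (by omega) le_rfl
            _ ≤ p / (1 - p) := sumF_range_le p hp0 hp _
  have hB : ∑ i ∈ Finset.Ico (21 + m) (27 + m), aCoef p (27 + m - i) * firstPassage p i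
      ≤ p / 50 * (aCoef p 5 + aCoef p 3 + aCoef p 1) := by
    rw [Finset.sum_Ico_eq_sum_range]
    have h6 : 27 + m - (21 + m) = 6 := by omega
    rw [h6]
    have hsub : ∀ k, 27 + m - (21 + m + k) = 6 - k := fun k => by omega
    simp only [hsub]
    rw [Finset.sum_range_succ, Finset.sum_range_succ, Finset.sum_range_succ,
      Finset.sum_range_succ, Finset.sum_range_succ, Finset.sum_range_succ,
      Finset.sum_range_zero]
    norm_num
    have P1 : firstPassage p (21 + m) + firstPassage p (21 + m + 1) ≤ p / 50 :=
      F_pair hp0 hp (by omega)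
    have P2 : firstPassage p (21 + m + 2) + firstPassage p (21 + m + 3) ≤ p / 50 := by
      have := F_pair hp0 hp (show 21 ≤ 21 + m + 2 by omega)
      convert this using 3
    have P3 : firstPassage p (21 + m + 4) + firstPassage p (21 + m + 5) ≤ p / 50 := by
      have := F_pair hp0 hp (show 21 ≤ 21 + m + 4 by omega)
      convert this using 3
    have ha5 := aCoef_nonneg hp0 hp 5
    have ha3 := aCoef_nonneg hp0 hp 3
    have ha1 := aCoef_nonneg hp0 hp 1
    have h65 : aCoef p 6 ≤ aCoef p 5 := aCoef_anti hp0 hp (by omega)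
    have h43 : aCoef p 4 ≤ aCoef p 3 := aCoef_anti hp0 hp (by omega)
    have h21 : aCoef p 2 ≤ aCoef p 1 := aCoef_anti hp0 hp (by omega)
    have q1 : aCoef p 6 * firstPassage p (21 + m) ≤ aCoef p 5 * firstPassage p (21 + m) :=
      mul_le_mul_of_nonneg_right h65 (hFnn _)
    have q2 : aCoef p 4 * firstPassage p (21 + m + 2) ≤ aCoef p 3 * firstPassage p (21 + m + 2) :=
      mul_le_mul_of_nonneg_right h43 (hFnn _)
    have q3 : aCoef p 2 * firstPassage p (21 + m + 4) ≤ aCoef p 1 * firstPassage p (21 + m + 4) :=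
      mul_le_mul_of_nonneg_right h21 (hFnn _)
    have r1 : aCoef p 5 * (firstPassage p (21 + m) + firstPassage p (21 + m + 1))
        ≤ aCoef p 5 * (p / 50) := mul_le_mul_of_nonneg_left P1 ha5
    have r2 : aCoef p 3 * (firstPassage p (21 + m + 2) + firstPassage p (21 + m + 3))
        ≤ aCoef p 3 * (p / 50) := mul_le_mul_of_nonneg_left P2 ha3
    have r3 : aCoef p 1 * (firstPassage p (21 + m + 4) + firstPassage p (21 + m + 5))
        ≤ aCoef p 1 * (p / 50) := mul_le_mul_of_nonneg_left P3 ha1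
    nlinarith [q1, q2, q3, r1, r2, r3]
  linarith [hA, hB]
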